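/- Let κ : K_1 → K_{−1} be the isomorphism determined by κ(θ_x x) = θ_x x for x ∈ X and κ(θ_r r) = θ_r for r ∈ R. Then the Miller Machine M(G) is isomorphic to the HNN extension of H = ⟨X ∪ Θ⟩_{M(G)} ≅ F(X) × F(Θ) along κ, with stable letter q; that is, M(G) is isomorphic to the group generated by X ∪ Θ ∪ {q} subject to the relations θ_α x = x θ_α (x ∈ X, α ∈ X ∪ R), q θ_x x q⁻¹ = θ_x x (x ∈ X), and q θ_r r q⁻¹ = θ_r (r ∈ R). -/

import Mathlib

/-!
Common setup: a finitely presented group `G = ⟨X ∣ R⟩` (`X` a finite set, `R` a finite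
nonempty set of words of the free group `F(X)`) and its Miller machine `M(G)`,
the group generated by `X ∪ Θ ∪ {q}`, where `Θ = {θ_α : α ∈ X ∪ R}`, subject to
the relations `θ_α x = x θ_α` (`x ∈ X`, `α ∈ X ∪ R`), `θ_x x q = q x θ_x` (`x ∈ X`)
and `θ_r q = q r θ_r` (`r ∈ R`).
-/

namespace Miller

noncomputable section

/-- Index type for the letters `Θ`: one letter `θ_α` for each `α ∈ X ∪ R`
(since `X ∩ R = ∅`, the disjoint sum is faithful). -/
abbrev ThIdx (X : Type) (R : Finset (FreeGroup X)) : Type := X ⊕ {r : FreeGroup X // r ∈ R}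

/-- The generators of the Miller machine: the letters of `X`, the letters `Θ`, and `q`. -/
abbrev Gen (X : Type) (R : Finset (FreeGroup X)) : Type := X ⊕ (ThIdx X R ⊕ Unit)

variable (X : Type) (R : Finset (FreeGroup X))

/-- The letter `x ∈ X`, as a word on the generators of `M(G)`. -/
def xg (x : X) : FreeGroup (Gen X R) := FreeGroup.of (Sum.inl x)

/-- The letter `θ_α`, as a word on the generators of `M(G)`. -/
def θg (a : ThIdx X R) : FreeGroup (Gen X R) := FreeGroup.of (Sum.inr (Sum.inl a))

/-- The letter `q`, as a word on the generators of `M(G)`. -/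
def qg : FreeGroup (Gen X R) := FreeGroup.of (Sum.inr (Sum.inr ()))

/-- A word on `X` is in particular a word on the generators of `M(G)`. -/
def ofX : FreeGroup X →* FreeGroup (Gen X R) := FreeGroup.map Sum.inl

/-- The defining relators of the Miller machine `M(G)`. -/
def rels : Set (FreeGroup (Gen X R)) :=
  {w | (∃ (a : ThIdx X R) (x : X),
          w = θg X R a * xg X R x * (xg X R x * θg X R a)⁻¹) ∨
       (∃ x : X,
          w = θg X R (Sum.inl x) * xg X R x * qg X R *
              (qg X R * xg X R x * θg X R (Sum.inl x))⁻¹) ∨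
       (∃ r : {r : FreeGroup X // r ∈ R},
          w = θg X R (Sum.inr r) * qg X R *
              (qg X R * ofX X R r.1 * θg X R (Sum.inr r))⁻¹)}

/-- The group `G = ⟨X ∣ R⟩`. -/
abbrev G := PresentedGroup (R : Set (FreeGroup X))

/-- The Miller machine `M(G)`. -/
abbrev M := PresentedGroup (rels X R)

/-- The element of `G` represented by a word on `X`. -/
def toG : FreeGroup X →* G X R := PresentedGroup.mk _

/-- The element of `M(G)` represented by a word on the generators. -/
def toM : FreeGroup (Gen X R) →* M X R := PresentedGroup.mk _

/-- The element of `M(G)` represented by a word on `X`. -/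
def embX : FreeGroup X →* M X R := (toM X R).comp (ofX X R)

/-- The element of `M(G)` represented by a word on `Θ`. -/
def embTh : FreeGroup (ThIdx X R) →* M X R :=
  (toM X R).comp (FreeGroup.map fun a => Sum.inr (Sum.inl a))

/-- The generator `x ∈ X` as element of `M(G)`. -/
def xM (x : X) : M X R := toM X R (xg X R x)

/-- The generator `θ_α` as element of `M(G)`. -/
def θM (a : ThIdx X R) : M X R := toM X R (θg X R a)

/-- The generator `q` as element of `M(G)`. -/
def qM : M X R := toM X R (qg X R)

/-- The subgroup `⟨X, q⟩` of `M(G)`. -/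
def XqSub : Subgroup (M X R) := Subgroup.closure (Set.range (xM X R) ∪ {qM X R})

/-- The subgroup `⟨Θ⟩` of `M(G)`. -/
def ThSub : Subgroup (M X R) := Subgroup.closure (Set.range (θM X R))

/-- The subgroup `H = ⟨X ∪ Θ⟩` of `M(G)`. -/
def Hgrp : Subgroup (M X R) := Subgroup.closure (Set.range (xM X R) ∪ Set.range (θM X R))

/-- The subgroup `K₋₁ = ⟨{θ_x x : x ∈ X} ∪ {θ_r : r ∈ R}⟩` of `M(G)`. -/
def Kneg : Subgroup (M X R) := Subgroup.closure
  ((Set.range fun x : X => θM X R (Sum.inl x) * xM X R x) ∪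
   (Set.range fun r : {r : FreeGroup X // r ∈ R} => θM X R (Sum.inr r)))

/-- The subgroup `K₁ = ⟨{θ_x x : x ∈ X} ∪ {θ_r r : r ∈ R}⟩` of `M(G)`. -/
def Kpos : Subgroup (M X R) := Subgroup.closure
  ((Set.range fun x : X => θM X R (Sum.inl x) * xM X R x) ∪
   (Set.range fun r : {r : FreeGroup X // r ∈ R} => θM X R (Sum.inr r) * embX X R r.1))

/-- `‖g‖`: the (reduced) word length of an element of a free group. -/
def wlen {β : Type} (g : FreeGroup β) : ℕ :=
  sInf {n | ∃ l : List (β × Bool), FreeGroup.mk l = g ∧ l.length = n}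

/-- `|g|`: word length in `M(G)` with respect to the generating set `X ∪ Θ ∪ {q}`. -/
def mlen (g : M X R) : ℕ :=
  sInf {n | ∃ w : FreeGroup (Gen X R), toM X R w = g ∧ wlen w = n}

/-- `c(u,v)`: the minimal length of a conjugator taking `u` to `v` in `M(G)`. -/
def c (u v : M X R) : ℕ :=
  sInf {n | ∃ γ : M X R, γ * u * γ⁻¹ = v ∧ mlen X R γ = n}

/-- `c'(u,v)`: the minimal length of a conjugator in `⟨X ∪ Θ⟩` taking `u` to `v`. -/
def c' (u v : M X R) : ℕ :=
  sInf {n | ∃ γ ∈ Hgrp X R, γ * u * γ⁻¹ = v ∧ mlen X R γ = n}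

/-- The product `∏_{i<m} w_i r_i w_i⁻¹`. -/
def prodConj (m : ℕ) (w r : ℕ → FreeGroup X) : FreeGroup X :=
  ((List.range m).map fun i => w i * r i * (w i)⁻¹).prod

/-- `r_0, …, r_{m-1} ∈ R^{±1}`. -/
def IsRelSeq (m : ℕ) (r : ℕ → FreeGroup X) : Prop := ∀ i < m, r i ∈ R ∨ (r i)⁻¹ ∈ R

/-- `δ(g)`: the least `m` such that `g` is freely equal to a product of `m`
conjugates of elements of `R^{±1}`. -/
def area (g : FreeGroup X) : ℕ :=
  sInf {m | ∃ w r : ℕ → FreeGroup X, IsRelSeq X R m r ∧ g = prodConj X m w r}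

/-- The Dehn function `Δ` of the presentation `⟨X ∣ R⟩`. -/
def Dehn (n : ℕ) : ℕ :=
  sSup {d | ∃ g : FreeGroup X, wlen g ≤ n ∧ toG X R g = 1 ∧ area X R g = d}

/-- `f(w) = m + ‖w₁‖ + ‖w_m‖ + ∑_{i=1}^{m-1} ‖w_i⁻¹ w_{i+1}‖` (with `0`-based indexing). -/
def fval (m : ℕ) (w : ℕ → FreeGroup X) : ℕ :=
  m + wlen (w 0) + wlen (w (m - 1)) + ∑ i ∈ Finset.range (m - 1), wlen ((w i)⁻¹ * w (i + 1))

/-- `λ(g)`: the minimum of `f(w)` over expressions `w = ∏ w_i r_i w_i⁻¹` freely equal to `g`. -/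
def lam (g : FreeGroup X) : ℕ :=
  sInf {n | ∃ (m : ℕ) (w r : ℕ → FreeGroup X),
    1 ≤ m ∧ IsRelSeq X R m r ∧ g = prodConj X m w r ∧ fval X m w = n}

/-- `Λ(n)`: the maximum of `λ(g)` over words `g` with `g =_G 1` and `‖g‖ ≤ n`. -/
def Lam (n : ℕ) : ℕ :=
  sSup {d | ∃ g : FreeGroup X, wlen g ≤ n ∧ toG X R g = 1 ∧ lam X R g = d}

/-- `t = max({‖r‖ : r ∈ R} ∪ {2})`. -/
def t : ℕ := max (R.sup fun r => wlen r) 2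

/-- `w, ε` witness the iso-computational list conjugacy `u ∼^σ v` (indices `0,…,k-1`,
with the convention that the index after `k-1` is `0`, i.e. `σ_{k+1} = σ₁`). -/
def IsICLCWitness (k : ℕ) (σ : ℕ → ℤ) (u v : ℕ → FreeGroup X) (w ε : FreeGroup X) : Prop :=
  toG X R ε = 1 ∧ ∀ i < k,
    (σ i = 1 ∧ σ ((i + 1) % k) = 1 → w * ε * u i * w⁻¹ = v i) ∧
    (σ i = 1 ∧ σ ((i + 1) % k) = -1 → w * ε * u i * ε⁻¹ * w⁻¹ = v i) ∧
    (σ i = -1 ∧ σ ((i + 1) % k) = 1 → w * u i * w⁻¹ = v i) ∧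
    (σ i = -1 ∧ σ ((i + 1) % k) = -1 → w * u i * ε⁻¹ * w⁻¹ = v i)

/-- Iso-computational list conjugacy `u ∼^σ v`. -/
def ICLC (k : ℕ) (σ : ℕ → ℤ) (u v : ℕ → FreeGroup X) : Prop :=
  ∃ w ε : FreeGroup X, IsICLCWitness X R k σ u v w ε

/-- `c_{k,σ}(u,v)`: the least `‖w‖` over witnessing pairs `(w, ε)` for `u ∼^σ v`. -/
def cList (k : ℕ) (σ : ℕ → ℤ) (u v : ℕ → FreeGroup X) : ℕ :=
  sInf {n | ∃ w ε : FreeGroup X, IsICLCWitness X R k σ u v w ε ∧ wlen w = n}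

/-- `C_{k,σ}(n)`. -/
def CC (k : ℕ) (σ : ℕ → ℤ) (n : ℕ) : ℕ :=
  sSup {d | ∃ u v : ℕ → FreeGroup X, ICLC X R k σ u v ∧
    (∑ i ∈ Finset.range k, (wlen (u i) + wlen (v i))) ≤ n - 2 * k ∧
    cList X R k σ u v = d}

/-- The alphabet `X ∪ {q}`. -/
abbrev Yt (X : Type) : Type := X ⊕ Unit

/-- The letter `q` in the free group `F(X ∪ {q})`. -/
def qY : FreeGroup (Yt X) := FreeGroup.of (Sum.inr ())

/-- A word on `X` as a word on `X ∪ {q}`. -/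
def embY : FreeGroup X →* FreeGroup (Yt X) := FreeGroup.map Sum.inl

/-- The element of `M(G)` represented by a word on `X ∪ {q}`. -/
def toMY : FreeGroup (Yt X) →* M X R :=
  (toM X R).comp (FreeGroup.map (Sum.elim Sum.inl fun u => Sum.inr (Sum.inr u)))

/-- The word `q^{σ₁}u₁q^{σ₂}u₂⋯q^{σ_k}u_k` on `X ∪ {q}` (`0`-based indexing). -/
def qword (k : ℕ) (σ : ℕ → ℤ) (u : ℕ → FreeGroup X) : FreeGroup (Yt X) :=
  ((List.range k).map fun i => qY X ^ σ i * embY X (u i)).prod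

/-- The word `q^{σ₁}u₁q^{σ₂}u₂⋯q^{σ_k}u_k` is (freely) reduced, expressed as:
its reduced length equals the sum of the lengths of its letters. -/
def ReducedForm (k : ℕ) (σ : ℕ → ℤ) (u : ℕ → FreeGroup X) : Prop :=
  wlen (qword X k σ u) = k + ∑ i ∈ Finset.range k, wlen (u i)

/-- The element `q^{σ₁}u₁q^{σ₂}u₂⋯q^{σ_k}u_k` of `M(G)`. -/
def qwordM (k : ℕ) (σ : ℕ → ℤ) (u : ℕ → FreeGroup X) : M X R :=
  toMY X R (qword X k σ u)

/-- `σ` is a tuple of signs `±1`. -/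
def IsSgn (k : ℕ) (σ : ℕ → ℤ) : Prop := ∀ i < k, σ i = 1 ∨ σ i = -1

/-- `D_{k,σ}(n)`: restriction of the conjugator length function of `M(G)` to conjugate
pairs `x = q^{σ₁}u₁⋯q^{σ_k}u_k`, `y = q^{σ₁}v₁⋯q^{σ_k}v_k` that are reduced words with
`∑ (‖u_i‖ + ‖v_i‖) ≤ n - 2k`. -/
def Dk (k : ℕ) (σ : ℕ → ℤ) (n : ℕ) : ℕ :=
  sSup {d | ∃ u v : ℕ → FreeGroup X,
    ReducedForm X k σ u ∧ ReducedForm X k σ v ∧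
    IsConj (qwordM X R k σ u) (qwordM X R k σ v) ∧
    (∑ i ∈ Finset.range k, (wlen (u i) + wlen (v i))) ≤ n - 2 * k ∧
    c X R (qwordM X R k σ u) (qwordM X R k σ v) = d}

/-- `D'_{k,σ}(n)`: as `D_{k,σ}(n)`, but for pairs conjugate via an element of `⟨X ∪ Θ⟩`
and with minimal conjugator length measured over conjugators in `⟨X ∪ Θ⟩`. -/
def Dk' (k : ℕ) (σ : ℕ → ℤ) (n : ℕ) : ℕ :=
  sSup {d | ∃ u v : ℕ → FreeGroup X,
    ReducedForm X k σ u ∧ ReducedForm X k σ v ∧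
    (∃ γ ∈ Hgrp X R, γ * qwordM X R k σ u * γ⁻¹ = qwordM X R k σ v) ∧
    (∑ i ∈ Finset.range k, (wlen (u i) + wlen (v i))) ≤ n - 2 * k ∧
    c' X R (qwordM X R k σ u) (qwordM X R k σ v) = d}

/-- `D₀(n)`: restriction of the conjugator length function of `M(G)` to pairs
`(qu, q)` with `u` a word on `X`, `qu` conjugate to `q`, and `‖u‖ ≤ n - 2`. -/
def D0 (n : ℕ) : ℕ :=
  sSup {d | ∃ u : FreeGroup X, wlen u ≤ n - 2 ∧
    IsConj (qM X R * embX X R u) (qM X R) ∧ c X R (qM X R * embX X R u) (qM X R) = d}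

/-- `D'₀(n)`: as `D₀(n)`, via conjugators in `⟨X ∪ Θ⟩`. -/
def D0' (n : ℕ) : ℕ :=
  sSup {d | ∃ u : FreeGroup X, wlen u ≤ n - 2 ∧
    (∃ γ ∈ Hgrp X R, γ * (qM X R * embX X R u) * γ⁻¹ = qM X R) ∧
    c' X R (qM X R * embX X R u) (qM X R) = d}

/-- The endomorphism `φ_α` of `F(X ∪ {q})`: it fixes each `x ∈ X` and sends `q` to
`α⁻¹qα` if `α ∈ X` and to `qα` if `α ∈ R`. -/
def phi (a : ThIdx X R) : FreeGroup (Yt X) →* FreeGroup (Yt X) :=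
  FreeGroup.lift fun s =>
    match s with
    | Sum.inl x => FreeGroup.of (Sum.inl x : Yt X)
    | Sum.inr _ =>
      match a with
      | Sum.inl x' => (FreeGroup.of (Sum.inl x' : Yt X))⁻¹ * qY X * FreeGroup.of (Sum.inl x')
      | Sum.inr r => qY X * embY X r.1

end

end Miller

namespace Miller

/-- The relators of the presentation of `M(G)` as an HNN extension of `H` along `κ` with
stable letter `q`: `θ_α x = x θ_α` (`x ∈ X`, `α ∈ X ∪ R`), `q (θ_x x) q⁻¹ = θ_x x`
(`x ∈ X`), and `q (θ_r r) q⁻¹ = θ_r` (`r ∈ R`). -/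
def rels2 (X : Type) (R : Finset (FreeGroup X)) : Set (FreeGroup (Gen X R)) :=
  {w | (∃ (a : ThIdx X R) (x : X),
          w = θg X R a * xg X R x * (xg X R x * θg X R a)⁻¹) ∨
       (∃ x : X,
          w = qg X R * (θg X R (Sum.inl x) * xg X R x) * (qg X R)⁻¹ *
              (θg X R (Sum.inl x) * xg X R x)⁻¹) ∨
       (∃ r : {r : FreeGroup X // r ∈ R},
          w = qg X R * (θg X R (Sum.inr r) * ofX X R r.1) * (qg X R)⁻¹ *
              (θg X R (Sum.inr r))⁻¹)}

end Miller


namespace MillerAux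

open Miller

lemma mk_rel_one {α : Type} {S : Set (FreeGroup α)} {w : FreeGroup α} (hw : w ∈ S) :
    PresentedGroup.mk S w = 1 :=
  (QuotientGroup.eq_one_iff w).mpr (Subgroup.subset_normalClosure hw)

lemma lift_of_eq_mk {α : Type} (S : Set (FreeGroup α)) :
    FreeGroup.lift (fun g => (PresentedGroup.of g : PresentedGroup S)) = PresentedGroup.mk S := by
  ext g
  simp [PresentedGroup.of]

lemma comm_lift {β G : Type} [Group G] (φ : FreeGroup β →* G) (t : G)
    (h : ∀ x, Commute t (φ (FreeGroup.of x))) (w : FreeGroup β) : Commute t (φ w) := by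
  induction w using FreeGroup.induction_on with
  | C1 => simp only [map_one]; exact Commute.one_right t
  | of x => exact h x
  | inv_of x ih => rw [map_inv]; exact ih.inv_right
  | mul a b ha hb => rw [map_mul]; exact ha.mul_right hb

variable (X : Type) (R : Finset (FreeGroup X))

lemma relM1 (a : ThIdx X R) (x : X) :
    θM X R a * xM X R x = xM X R x * θM X R a := by
  have h : toM X R (θg X R a * xg X R x * (xg X R x * θg X R a)⁻¹) = 1 :=
    mk_rel_one (Or.inl ⟨a, x, rfl⟩)
  rw [map_mul, map_inv, map_mul, mul_inv_eq_one] at h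
  exact h

lemma relM2 (x : X) :
    θM X R (Sum.inl x) * xM X R x * qM X R = qM X R * xM X R x * θM X R (Sum.inl x) := by
  have h : toM X R (θg X R (Sum.inl x) * xg X R x * qg X R *
      (qg X R * xg X R x * θg X R (Sum.inl x))⁻¹) = 1 :=
    mk_rel_one (Or.inr (Or.inl ⟨x, rfl⟩))
  rw [map_mul, map_inv, map_mul, map_mul, mul_inv_eq_one] at h
  exact h

lemma relM3 (r : {r : FreeGroup X // r ∈ R}) :
    θM X R (Sum.inr r) * qM X R = qM X R * embX X R r.1 * θM X R (Sum.inr r) := by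
  have h : toM X R (θg X R (Sum.inr r) * qg X R *
      (qg X R * ofX X R r.1 * θg X R (Sum.inr r))⁻¹) = 1 :=
    mk_rel_one (Or.inr (Or.inr ⟨r, rfl⟩))
  rw [map_mul, map_inv, map_mul, map_mul, mul_inv_eq_one] at h
  exact h

lemma commM (a : ThIdx X R) (w : FreeGroup X) :
    Commute (θM X R a) (embX X R w) := by
  refine comm_lift (embX X R) _ (fun x => ?_) w
  have : embX X R (FreeGroup.of x) = xM X R x := rfl
  rw [this]
  exact relM1 X R a x

lemma qconj1 (x : X) :
    qM X R * (θM X R (Sum.inl x) * xM X R x) * (qM X R)⁻¹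
      = θM X R (Sum.inl x) * xM X R x := by
  rw [mul_inv_eq_iff_eq_mul]
  calc qM X R * (θM X R (Sum.inl x) * xM X R x)
      = qM X R * (xM X R x * θM X R (Sum.inl x)) := by rw [relM1]
    _ = qM X R * xM X R x * θM X R (Sum.inl x) := by rw [mul_assoc]
    _ = θM X R (Sum.inl x) * xM X R x * qM X R := (relM2 X R x).symm

lemma qconj2 (r : {r : FreeGroup X // r ∈ R}) :
    qM X R * (θM X R (Sum.inr r) * embX X R r.1) * (qM X R)⁻¹
      = θM X R (Sum.inr r) := by
  rw [mul_inv_eq_iff_eq_mul]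
  calc qM X R * (θM X R (Sum.inr r) * embX X R r.1)
      = qM X R * (embX X R r.1 * θM X R (Sum.inr r)) := by rw [commM]
    _ = qM X R * embX X R r.1 * θM X R (Sum.inr r) := by rw [mul_assoc]
    _ = θM X R (Sum.inr r) * qM X R := (relM3 X R r).symm

/-! ### Relations in `PresentedGroup (rels2 X R)` -/

abbrev P2 := PresentedGroup (rels2 X R)

def pmk : FreeGroup (Gen X R) →* P2 X R := PresentedGroup.mk _

def pθ (a : ThIdx X R) : P2 X R := pmk X R (θg X R a)
def px (x : X) : P2 X R := pmk X R (xg X R x)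
def pq : P2 X R := pmk X R (qg X R)
def pe : FreeGroup X →* P2 X R := (pmk X R).comp (ofX X R)

lemma rel2M1 (a : ThIdx X R) (x : X) : pθ X R a * px X R x = px X R x * pθ X R a := by
  have h : pmk X R (θg X R a * xg X R x * (xg X R x * θg X R a)⁻¹) = 1 :=
    mk_rel_one (Or.inl ⟨a, x, rfl⟩)
  rw [map_mul, map_inv, map_mul, mul_inv_eq_one] at h
  exact h

lemma rel2M2 (x : X) :
    pq X R * (pθ X R (Sum.inl x) * px X R x) * (pq X R)⁻¹
      = pθ X R (Sum.inl x) * px X R x := by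
  have h : pmk X R (qg X R * (θg X R (Sum.inl x) * xg X R x) * (qg X R)⁻¹ *
      (θg X R (Sum.inl x) * xg X R x)⁻¹) = 1 :=
    mk_rel_one (Or.inr (Or.inl ⟨x, rfl⟩))
  rw [map_mul, map_inv, map_mul, map_inv, map_mul, map_mul, mul_inv_eq_one] at h
  exact h

lemma rel2M3 (r : {r : FreeGroup X // r ∈ R}) :
    pq X R * (pθ X R (Sum.inr r) * pe X R r.1) * (pq X R)⁻¹ = pθ X R (Sum.inr r) := by
  have h : pmk X R (qg X R * (θg X R (Sum.inr r) * ofX X R r.1) * (qg X R)⁻¹ *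
      (θg X R (Sum.inr r))⁻¹) = 1 :=
    mk_rel_one (Or.inr (Or.inr ⟨r, rfl⟩))
  rw [map_mul, map_inv, map_mul, map_inv, map_mul, mul_inv_eq_one] at h
  exact h

lemma comm2 (a : ThIdx X R) (w : FreeGroup X) : Commute (pθ X R a) (pe X R w) := by
  refine comm_lift (pe X R) _ (fun x => ?_) w
  have : pe X R (FreeGroup.of x) = px X R x := rfl
  rw [this]
  exact rel2M1 X R a x

lemma rels_in_P2 : ∀ w ∈ rels X R,
    FreeGroup.lift (fun g => (PresentedGroup.of g : P2 X R)) w = 1 := by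
  intro w hw
  rw [lift_of_eq_mk]
  rcases hw with ⟨a, x, rfl⟩ | ⟨x, rfl⟩ | ⟨r, rfl⟩
  · rw [map_mul, map_inv, map_mul, mul_inv_eq_one]
    exact rel2M1 X R a x
  · rw [map_mul, map_inv, map_mul, map_mul, mul_inv_eq_one]
    show pθ X R (Sum.inl x) * px X R x * pq X R = pq X R * px X R x * pθ X R (Sum.inl x)
    calc pθ X R (Sum.inl x) * px X R x * pq X R
        = (pq X R * (pθ X R (Sum.inl x) * px X R x) * (pq X R)⁻¹) * pq X R := by
          rw [rel2M2]
      _ = pq X R * (pθ X R (Sum.inl x) * px X R x) := by group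
      _ = pq X R * (px X R x * pθ X R (Sum.inl x)) := by rw [rel2M1]
      _ = pq X R * px X R x * pθ X R (Sum.inl x) := by rw [mul_assoc]
  · rw [map_mul, map_inv, map_mul, map_mul, mul_inv_eq_one]
    show pθ X R (Sum.inr r) * pq X R = pq X R * pe X R r.1 * pθ X R (Sum.inr r)
    calc pθ X R (Sum.inr r) * pq X R
        = (pq X R * (pθ X R (Sum.inr r) * pe X R r.1) * (pq X R)⁻¹) * pq X R := by
          rw [rel2M3]
      _ = pq X R * (pθ X R (Sum.inr r) * pe X R r.1) := by group
      _ = pq X R * (pe X R r.1 * pθ X R (Sum.inr r)) := by rw [(comm2 X R _ _).eq]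
      _ = pq X R * pe X R r.1 * pθ X R (Sum.inr r) := by rw [mul_assoc]

lemma rels2_in_M : ∀ w ∈ rels2 X R,
    FreeGroup.lift (fun g => (PresentedGroup.of g : M X R)) w = 1 := by
  intro w hw
  rw [lift_of_eq_mk]
  rcases hw with ⟨a, x, rfl⟩ | ⟨x, rfl⟩ | ⟨r, rfl⟩
  · rw [map_mul, map_inv, map_mul, mul_inv_eq_one]
    exact relM1 X R a x
  · rw [map_mul, map_inv, map_mul, map_inv, map_mul, map_mul, mul_inv_eq_one]
    exact qconj1 X R x
  · rw [map_mul, map_inv, map_mul, map_inv, map_mul, mul_inv_eq_one]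
    exact qconj2 X R r

end MillerAux

open Miller in
/-- Let `κ : K₁ → K₋₁` be the isomorphism determined by `κ(θ_x x) = θ_x x`
for `x ∈ X` and `κ(θ_r r) = θ_r` for `r ∈ R`. Then the Miller machine `M(G)` is isomorphic
to the HNN extension of `H = ⟨X ∪ Θ⟩ ≅ F(X) × F(Θ)` along `κ` with stable letter `q`; that
is, `M(G)` is isomorphic (via a generator-preserving isomorphism) to the group generated by
`X ∪ Θ ∪ {q}` subject to the relations `θ_α x = x θ_α` (`x ∈ X`, `α ∈ X ∪ R`),
`q θ_x x q⁻¹ = θ_x x` (`x ∈ X`) and `q θ_r r q⁻¹ = θ_r` (`r ∈ R`). -/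
theorem statement6 (X : Type) [Fintype X] (R : Finset (FreeGroup X)) (hR : R.Nonempty) :
    (∃ κ : ↥(Kpos X R) ≃* ↥(Kneg X R),
      (∀ (x : X) (h : θM X R (Sum.inl x) * xM X R x ∈ Kpos X R),
        ((κ ⟨θM X R (Sum.inl x) * xM X R x, h⟩ : ↥(Kneg X R)) : M X R) =
          θM X R (Sum.inl x) * xM X R x) ∧
      (∀ (r : {r : FreeGroup X // r ∈ R}) (h : θM X R (Sum.inr r) * embX X R r.1 ∈ Kpos X R),
        ((κ ⟨θM X R (Sum.inr r) * embX X R r.1, h⟩ : ↥(Kneg X R)) : M X R) =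
          θM X R (Sum.inr r))) ∧
    (∃ e : M X R ≃* PresentedGroup (rels2 X R),
      ∀ g : Gen X R, e (toM X R (FreeGroup.of g)) = PresentedGroup.of g) := by
  constructor
  · -- the isomorphism κ, given by conjugation by q
    set f : M X R →* M X R := (MulAut.conj (qM X R)).toMonoidHom with hf
    have hinj : Function.Injective f := (MulAut.conj (qM X R)).injective
    have hfval : ∀ g : M X R, f g = qM X R * g * (qM X R)⁻¹ := fun g => rfl
    have hmap : (Kpos X R).map f = Kneg X R := by
      rw [Kpos, Kneg, MonoidHom.map_closure, Set.image_union, ← Set.range_comp,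
        ← Set.range_comp]
      congr 1
      refine congrArg₂ (· ∪ · : Set (M X R) → Set (M X R) → Set (M X R)) ?_ ?_
      · refine congrArg Set.range (funext fun x => ?_)
        show f (θM X R (Sum.inl x) * xM X R x) = _
        rw [hfval]
        exact MillerAux.qconj1 X R x
      · refine congrArg Set.range (funext fun r => ?_)
        show f (θM X R (Sum.inr r) * embX X R r.1) = _
        rw [hfval]
        exact MillerAux.qconj2 X R r
    refine ⟨((Kpos X R).equivMapOfInjective f hinj).trans (MulEquiv.subgroupCongr hmap),
      fun x h => ?_, fun r h => ?_⟩
    · rw [MulEquiv.trans_apply, MulEquiv.subgroupCongr_apply,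
        Subgroup.coe_equivMapOfInjective_apply]
      exact MillerAux.qconj1 X R x
    · rw [MulEquiv.trans_apply, MulEquiv.subgroupCongr_apply,
        Subgroup.coe_equivMapOfInjective_apply]
      exact MillerAux.qconj2 X R r
  · -- the isomorphism of presented groups
    set F : M X R →* PresentedGroup (rels2 X R) :=
      PresentedGroup.toGroup (MillerAux.rels_in_P2 X R) with hF
    set G2 : PresentedGroup (rels2 X R) →* M X R :=
      PresentedGroup.toGroup (MillerAux.rels2_in_M X R) with hG2
    have h1 : G2.comp F = MonoidHom.id _ := by
      ext g
      show G2 (F (PresentedGroup.of g)) = PresentedGroup.of g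
      rw [hF, PresentedGroup.toGroup.of, hG2, PresentedGroup.toGroup.of]
    have h2 : F.comp G2 = MonoidHom.id _ := by
      ext g
      show F (G2 (PresentedGroup.of g)) = PresentedGroup.of g
      rw [hG2, PresentedGroup.toGroup.of, hF, PresentedGroup.toGroup.of]
    refine ⟨MonoidHom.toMulEquiv F G2 h1 h2, fun g => ?_⟩
    show F (toM X R (FreeGroup.of g)) = PresentedGroup.of g
    have : toM X R (FreeGroup.of g) = PresentedGroup.of g := rfl
    rw [this, hF, PresentedGroup.toGroup.of]
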